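/- arXiv:2210.16357 — 4 statements merged into one kernel-verified Lean document; each statement's English description precedes it below -/
import Mathlib

section
/- Let (x_n) be i.i.d. samples from P ∈ P_k(X), and let P_n = (1/n)∑_{i=1}^n δ_{x_i}. Assume H(k) is separable and ∫ √(k(x,x)) dP(x) < ∞. Then μ_k(P_n) → μ_k(P) almost surely in the norm of H(k). -/
open MeasureTheory Filter

/-- Strong consistency of the kernel mean element.  For i.i.d. samples
`ξ i` with law `P ∈ P_k(X)`, a separable RKHS `H(k)` (modelled by a separable Hilbert
space `H` with feature map `Φ`, so `k(x,x) = ‖Φ x‖²`), and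
`∫ √(k(x,x)) dP(x) < ∞`, the empirical kernel mean `μ_k(P_n) = (1/n) ∑ Φ(ξ i)`
converges almost surely in `H(k)`-norm to `μ_k(P) = ∫ Φ dP`. -/
theorem kernel_mean_strong_consistency
    {Ω : Type*} [MeasurableSpace Ω] (μ : Measure Ω) [IsProbabilityMeasure μ]
    {X : Type*} [MeasurableSpace X] (P : Measure X) [IsProbabilityMeasure P]
    {H : Type*} [NormedAddCommGroup H] [InnerProductSpace ℝ H] [CompleteSpace H]
    [MeasurableSpace H] [BorelSpace H] [TopologicalSpace.SeparableSpace H]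
    (Φ : X → H) (hΦ : Measurable Φ)
    (ξ : ℕ → Ω → X) (hmeas : ∀ i, Measurable (ξ i))
    (hindep : ProbabilityTheory.iIndepFun ξ μ)
    (hdist : ∀ i, Measure.map (ξ i) μ = P)
    (hint : Integrable (fun x => Real.sqrt (inner ℝ (Φ x) (Φ x) : ℝ)) P) :
    ∀ᵐ ω ∂μ, Tendsto (fun n : ℕ => (n : ℝ)⁻¹ • ∑ i ∈ Finset.range n, Φ (ξ i ω))
      atTop (nhds (∫ x, Φ x ∂P)) := by
  have hnorm : (fun x => Real.sqrt (inner ℝ (Φ x) (Φ x) : ℝ)) = fun x => ‖Φ x‖ := by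
    funext x
    rw [real_inner_self_eq_norm_sq, Real.sqrt_sq (norm_nonneg _)]
  have hΦsm : StronglyMeasurable Φ := hΦ.stronglyMeasurable
  have hΦint : Integrable Φ P := by
    refine ⟨hΦsm.aestronglyMeasurable, ?_⟩
    rw [hnorm] at hint
    simpa [HasFiniteIntegral] using hint.hasFiniteIntegral
  have hintc : Integrable (fun ω => Φ (ξ 0 ω)) μ := by
    rw [← hdist 0] at hΦint
    exact hΦint.comp_measurable (hmeas 0)
  have hident : ∀ i, ProbabilityTheory.IdentDistrib (fun ω => Φ (ξ i ω))
      (fun ω => Φ (ξ 0 ω)) μ μ := by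
    intro i
    refine ProbabilityTheory.IdentDistrib.comp ?_ hΦ
    exact ⟨(hmeas i).aemeasurable, (hmeas 0).aemeasurable, by rw [hdist i, hdist 0]⟩
  have hpind : Pairwise (Function.onFun (ProbabilityTheory.IndepFun · · μ) fun i ω => Φ (ξ i ω)) := by
    intro i j hij
    exact ((hindep.indepFun hij).comp hΦ hΦ)
  have := ProbabilityTheory.strong_law_ae (μ := μ) (fun i ω => Φ (ξ i ω)) hintc hpind hident
  have hEq : (∫ ω, Φ (ξ 0 ω) ∂μ) = ∫ x, Φ x ∂P := by
    rw [← hdist 0, integral_map (hmeas 0).aemeasurable hΦsm.aestronglyMeasurable]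
  rwa [hEq] at this
end

section
/- Under the assumptions that H(k) is separable and ∫ √(k(x,x)) dP(x) < ∞, the empirical kernel discrepancy converges uniformly over the model: sup_{θ∈Θ} |D_k(P_n, P_θ) - D_k(P, P_θ)| → 0 almost surely. -/
open MeasureTheory Filter

/-- Uniform convergence in discrepancy.  With `H(k)` separable and
`∫ √(k(x,x)) dP(x) < ∞`, for any statistical model `{P_θ}_{θ∈Θ} ⊂ P_k(X)` the
empirical kernel discrepancy `D_k(P_n, P_θ) = ‖μ_k(P_n) - μ_k(P_θ)‖` converges to
`D_k(P, P_θ)` almost surely, uniformly over `θ ∈ Θ` (i.e.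
`sup_θ |D_k(P_n,P_θ) - D_k(P,P_θ)| → 0` a.s.). -/
theorem uniform_convergence_in_discrepancy
    {Ω : Type*} [MeasurableSpace Ω] (μ : Measure Ω) [IsProbabilityMeasure μ]
    {X : Type*} [MeasurableSpace X] (P : Measure X) [IsProbabilityMeasure P]
    {H : Type*} [NormedAddCommGroup H] [InnerProductSpace ℝ H] [CompleteSpace H]
    [MeasurableSpace H] [BorelSpace H] [TopologicalSpace.SeparableSpace H]
    (Φ : X → H) (hΦ : Measurable Φ)
    {Θ : Type*} (Pmod : Θ → Measure X) [∀ θ, IsProbabilityMeasure (Pmod θ)]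
    (hmod : ∀ θ, Integrable Φ (Pmod θ))
    (ξ : ℕ → Ω → X) (hmeas : ∀ i, Measurable (ξ i))
    (hindep : ProbabilityTheory.iIndepFun (m := fun _ => inferInstance) ξ μ)
    (hdist : ∀ i, Measure.map (ξ i) μ = P)
    (hint : Integrable (fun x => Real.sqrt (inner ℝ (Φ x) (Φ x) : ℝ)) P) :
    ∀ᵐ ω ∂μ, TendstoUniformly
      (fun (n : ℕ) (θ : Θ) =>
        ‖((n : ℝ)⁻¹ • ∑ i ∈ Finset.range n, Φ (ξ i ω)) - ∫ x, Φ x ∂(Pmod θ)‖)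
      (fun θ => ‖(∫ x, Φ x ∂P) - ∫ x, Φ x ∂(Pmod θ)‖) atTop := by
  -- Integrability of Φ with respect to P
  have hnorm : ∀ x, Real.sqrt (inner ℝ (Φ x) (Φ x) : ℝ) = ‖Φ x‖ := by
    intro x
    rw [real_inner_self_eq_norm_sq, Real.sqrt_sq (norm_nonneg _)]
  have hΦP : Integrable Φ P := by
    refine ⟨(hΦ.aemeasurable).aestronglyMeasurable, ?_⟩
    have := hint.hasFiniteIntegral
    simpa [HasFiniteIntegral, hnorm] using this
  -- Set up the sequence Y i = Φ ∘ ξ i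
  set Y : ℕ → Ω → H := fun i ω => Φ (ξ i ω) with hY
  have hYmeas : ∀ i, Measurable (Y i) := fun i => hΦ.comp (hmeas i)
  have hmap : ∀ i, Measure.map (Y i) μ = Measure.map Φ P := by
    intro i
    rw [hY]
    rw [← hdist i, Measure.map_map hΦ (hmeas i)]
    rfl
  have hident : ∀ i, ProbabilityTheory.IdentDistrib (Y i) (Y 0) μ μ := by
    intro i
    exact ⟨(hYmeas i).aemeasurable, (hYmeas 0).aemeasurable, by rw [hmap i, hmap 0]⟩
  have hYint : Integrable (Y 0) μ := by
    rw [hY]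
    have : Integrable Φ (Measure.map (ξ 0) μ) := by rw [hdist 0]; exact hΦP
    exact (integrable_map_measure hΦ.aestronglyMeasurable (hmeas 0).aemeasurable).mp this
  have hYindep : Pairwise (Function.onFun (ProbabilityTheory.IndepFun · · μ) Y) := by
    intro i j hij
    exact ((hindep.indepFun hij).comp hΦ hΦ)
  have hSLLN := ProbabilityTheory.strong_law_ae Y hYint hYindep hident
  have hEY : ∫ ω, Y 0 ω ∂μ = ∫ x, Φ x ∂P := by
    rw [hY, ← hdist 0, integral_map (hmeas 0).aemeasurable hΦ.aestronglyMeasurable]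
  filter_upwards [hSLLN] with ω hω
  rw [hEY] at hω
  rw [Metric.tendstoUniformly_iff]
  intro ε hε
  rw [Metric.tendsto_nhds] at hω
  filter_upwards [hω ε hε] with n hn θ
  have key : dist ((n : ℝ)⁻¹ • ∑ i ∈ Finset.range n, Y i ω) (∫ x, Φ x ∂P) < ε := hn
  calc dist ‖(∫ x, Φ x ∂P) - ∫ x, Φ x ∂(Pmod θ)‖
        ‖((n : ℝ)⁻¹ • ∑ i ∈ Finset.range n, Φ (ξ i ω)) - ∫ x, Φ x ∂(Pmod θ)‖
      ≤ ‖((∫ x, Φ x ∂P) - ∫ x, Φ x ∂(Pmod θ)) -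
          (((n : ℝ)⁻¹ • ∑ i ∈ Finset.range n, Φ (ξ i ω)) - ∫ x, Φ x ∂(Pmod θ))‖ :=
        abs_norm_sub_norm_le _ _
    _ = dist ((n : ℝ)⁻¹ • ∑ i ∈ Finset.range n, Y i ω) (∫ x, Φ x ∂P) := by
        rw [dist_eq_norm, ← norm_neg]; congr 1; abel
    _ < ε := key
end

section
/- Let Θ be a topological space, f, f_n : Θ → ℝ with sup_θ |f_n(θ) - f(θ)| → 0, and suppose for some ε > 0 the closure C of {θ ∈ Θ : f(θ) < ε + inf_ϑ f(ϑ)} is sequentially compact. If θ_n minimises f_n for each n, then the sequence (θ_n) is eventually contained in C and has at least one accumulation point. -/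
open Filter

/-- If `sup_θ |f_n(θ) - f(θ)| → 0`, `f` is bounded below, and for some
`ε > 0` the closure `C` of `{θ : f(θ) < ε + inf_ϑ f(ϑ)}` is sequentially compact, then
any sequence `(θ_n)` of minimisers of `f_n` is eventually contained in `C` and has at
least one accumulation point. -/
theorem minimisers_have_accumulation_point
    {Θ : Type*} [TopologicalSpace Θ] [Nonempty Θ]
    (f : Θ → ℝ) (fn : ℕ → Θ → ℝ)
    (hbdd : BddBelow (Set.range f))
    (ε : ℝ) (hε : 0 < ε)
    (C : Set Θ) (hC : C = closure {θ | f θ < ε + ⨅ ϑ, f ϑ})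
    (hcomp : IsSeqCompact C)
    (hunif : TendstoUniformly fn f atTop)
    (θn : ℕ → Θ) (hmin : ∀ n θ, fn n (θn n) ≤ fn n θ) :
    (∀ᶠ n in atTop, θn n ∈ C) ∧
      ∃ θstar ∈ C, ∃ φ : ℕ → ℕ, StrictMono φ ∧
        Tendsto (θn ∘ φ) atTop (nhds θstar) := by
  have hkey : ∀ᶠ n in atTop, θn n ∈ C := by
    have h3 : (0:ℝ) < ε / 3 := by linarith
    filter_upwards [Metric.tendstoUniformly_iff.mp hunif (ε/3) h3] with n hn
    have hfle : ∀ θ, f (θn n) ≤ f θ + 2 * (ε/3) := by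
      intro θ
      have h1 := hn (θn n)
      have h2 := hn θ
      have := hmin n θ
      rw [Real.dist_eq] at h1 h2
      have := abs_lt.mp h1
      have := abs_lt.mp h2
      linarith [(abs_lt.mp h1).1, (abs_lt.mp h1).2, (abs_lt.mp h2).1, (abs_lt.mp h2).2]
    have hinf : f (θn n) - 2 * (ε/3) ≤ ⨅ ϑ, f ϑ := by
      apply le_ciInf
      intro θ
      linarith [hfle θ]
    rw [hC]
    apply subset_closure
    simp only [Set.mem_setOf_eq]
    linarith
  refine ⟨hkey, ?_⟩
  obtain ⟨N, hN⟩ := eventually_atTop.mp hkey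
  have hmem : ∀ k, θn (N + k) ∈ C := fun k => hN _ (Nat.le_add_right _ _)
  obtain ⟨θstar, hθC, φ, hφ, hlim⟩ := hcomp hmem
  refine ⟨θstar, hθC, (fun k => N + φ k), fun a b hab => by simpa using hφ hab, hlim⟩
end

section
/- Let Θ ⊂ ℝ^p be bounded, f : Θ → ℝ fixed, and (f_n) a sequence of random functions f_n : Θ → ℝ such that (i) f_n(θ) → f(θ) almost surely for each θ ∈ Θ, and (ii) |f_n(θ) - f_n(ϑ)| ≤ B_n ‖θ - ϑ‖ for all θ, ϑ ∈ Θ where B_n does not depend on θ, ϑ and almost surely limsup B_n < ∞. Then sup_{θ∈Θ} |f_n(θ) - f(θ)| → 0 almost surely. -/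
open MeasureTheory Filter

/-- Uniform law of large numbers.  Let `Θ ⊂ ℝ^p` be bounded, `f` fixed,
and `(f_n)` random functions with (i) `f_n(θ) → f(θ)` a.s. for each `θ ∈ Θ`, and
(ii) `|f_n(θ) - f_n(ϑ)| ≤ B_n ‖θ - ϑ‖` on `Θ`, where a.s. `limsup B_n < ∞` (the
sequence `B_n` is eventually bounded).  Then `sup_{θ∈Θ} |f_n(θ) - f(θ)| → 0` a.s. -/
theorem uniform_law_of_large_numbers
    {Ω : Type*} [MeasurableSpace Ω] (μ : Measure Ω) [IsProbabilityMeasure μ]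
    {p : ℕ} (Θ : Set (EuclideanSpace ℝ (Fin p))) (hΘ : Bornology.IsBounded Θ)
    (f : EuclideanSpace ℝ (Fin p) → ℝ)
    (fn : ℕ → Ω → EuclideanSpace ℝ (Fin p) → ℝ)
    (B : ℕ → Ω → ℝ)
    (hpt : ∀ θ ∈ Θ, ∀ᵐ ω ∂μ, Tendsto (fun n => fn n ω θ) atTop (nhds (f θ)))
    (hlip : ∀ n ω, ∀ θ ∈ Θ, ∀ ϑ ∈ Θ, |fn n ω θ - fn n ω ϑ| ≤ B n ω * ‖θ - ϑ‖)
    (hB : ∀ᵐ ω ∂μ, IsBoundedUnder (· ≤ ·) atTop (fun n => B n ω)) :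
    ∀ᵐ ω ∂μ, TendstoUniformlyOn (fun n θ => fn n ω θ) f atTop Θ := by
  classical
  -- countable dense subset of Θ
  obtain ⟨D, hDΘ, hDc, hDd⟩ :=
    ((TopologicalSpace.isSeparable_univ_iff.2 inferInstance).mono
      (Set.subset_univ Θ)).exists_countable_dense_subset
  have hDTB : TotallyBounded D := (hΘ.isCompact_closure.totallyBounded.subset
    subset_closure).subset hDΘ
  -- the good event
  set P : Ω → Prop := fun ω =>
    (∀ d ∈ D, Tendsto (fun n => fn n ω d) atTop (nhds (f d))) ∧
      ∃ C, ∀ᶠ n in atTop, B n ω ≤ C with hPdef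
  have hPae : ∀ᵐ ω ∂μ, P ω := by
    have h1 : ∀ᵐ ω ∂μ, ∀ d ∈ D, Tendsto (fun n => fn n ω d) atTop (nhds (f d)) :=
      (ae_ball_iff hDc).2 fun d hd => hpt d (hDΘ hd)
    filter_upwards [h1, hB] with ω hω1 hω2
    refine ⟨hω1, ?_⟩
    obtain ⟨C, hC⟩ := hω2
    exact ⟨C, eventually_map.1 hC⟩
  -- uniform Cauchy property on the good event
  have hcau : ∀ ω, P ω → UniformCauchySeqOn (fun n θ => fn n ω θ) atTop Θ := by
    rintro ω ⟨hconv, C, hC⟩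
    rw [Metric.uniformCauchySeqOn_iff]
    intro ε hε
    set C' := max C 0 with hC'def
    have hC'0 : (0 : ℝ) ≤ C' := le_max_right _ _
    set δ := ε / (3 * (C' + 1)) with hδdef
    have hδ0 : 0 < δ := by positivity
    -- finite (δ/2)-net of D, which gives a δ-net of Θ
    obtain ⟨F, hFD, hFfin, hFcov⟩ := totallyBounded_iff_subset.1 hDTB
      {q | dist q.1 q.2 < δ / 2} (Metric.dist_mem_uniformity (by positivity))
    have hnet : ∀ θ ∈ Θ, ∃ y ∈ F, dist θ y < δ := by
      intro θ hθ
      obtain ⟨d, hdD, hdd⟩ := Metric.mem_closure_iff.1 (hDd hθ) (δ / 2) (by positivity)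
      obtain ⟨y, hyF, hdy⟩ := Set.mem_iUnion₂.1 (hFcov hdD)
      refine ⟨y, hyF, ?_⟩
      calc dist θ y ≤ dist θ d + dist d y := dist_triangle _ _ _
        _ < δ / 2 + δ / 2 := add_lt_add hdd hdy
        _ = δ := by ring
    -- Cauchy at net points, uniformly over the finite net
    have hy : ∀ y ∈ F, ∃ N, ∀ m ≥ N, ∀ n ≥ N,
        dist (fn m ω y) (fn n ω y) < ε / 3 := fun y hyF =>
      Metric.cauchySeq_iff.1 (hconv y (hFD hyF)).cauchySeq (ε / 3) (by positivity)
    choose! N hN using hy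
    obtain ⟨N2, hN2⟩ := (hFfin.image N).bddAbove
    obtain ⟨N3, hN3⟩ := eventually_atTop.1 hC
    refine ⟨max N2 N3, fun m hm n hn θ hθ => ?_⟩
    obtain ⟨y, hyF, hθy⟩ := hnet θ hθ
    have hyΘ : y ∈ Θ := hDΘ (hFD hyF)
    have hNy : N y ≤ N2 := hN2 (Set.mem_image_of_mem N hyF)
    have hmid : dist (fn m ω y) (fn n ω y) < ε / 3 :=
      hN y hyF m (le_trans (hNy.trans (le_max_left _ _)) hm) n
        (le_trans (hNy.trans (le_max_left _ _)) hn)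
    have hBle : ∀ k, max N2 N3 ≤ k → dist (fn k ω θ) (fn k ω y) ≤ C' * δ := by
      intro k hk
      have hBk : B k ω ≤ C' := (hN3 k (le_trans (le_max_right _ _) hk)).trans (le_max_left _ _)
      have h1 : dist (fn k ω θ) (fn k ω y) ≤ B k ω * dist θ y := by
        rw [Real.dist_eq, dist_eq_norm]
        exact hlip k ω θ hθ y hyΘ
      calc dist (fn k ω θ) (fn k ω y) ≤ B k ω * dist θ y := h1
        _ ≤ C' * dist θ y := mul_le_mul_of_nonneg_right hBk dist_nonneg
        _ ≤ C' * δ := mul_le_mul_of_nonneg_left hθy.le hC'0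
    have hCδ : C' * δ ≤ ε / 3 := by
      rw [hδdef, mul_div_assoc']
      rw [div_le_div_iff₀ (by positivity) (by norm_num)]
      nlinarith [hε.le, hC'0]
    calc dist (fn m ω θ) (fn n ω θ)
        ≤ dist (fn m ω θ) (fn m ω y) + dist (fn m ω y) (fn n ω y)
            + dist (fn n ω y) (fn n ω θ) := dist_triangle4 _ _ _ _
      _ < C' * δ + ε / 3 + C' * δ := by
          have h3 : dist (fn n ω y) (fn n ω θ) ≤ C' * δ := by
            rw [dist_comm]; exact hBle n hn
          have h4 := hBle m hm
          linarith [hmid]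
      _ ≤ ε := by linarith [hCδ]
  -- pointwise convergence to f everywhere on Θ, on the good event
  have hptall : ∀ ω, P ω → ∀ θ ∈ Θ, Tendsto (fun n => fn n ω θ) atTop (nhds (f θ)) := by
    have haeNeBot : (MeasureTheory.ae μ).NeBot := ae_neBot.2 (IsProbabilityMeasure.ne_zero μ)
    -- every good ω has a uniform limit function, continuous on Θ
    have hlimfun : ∀ ω, P ω → ∃ g : EuclideanSpace ℝ (Fin p) → ℝ,
        (∀ θ ∈ Θ, Tendsto (fun n => fn n ω θ) atTop (nhds (g θ))) ∧
          ContinuousOn g Θ ∧ ∀ d ∈ D, g d = f d := by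
      intro ω hP
      have hc := hcau ω hP
      have hptc : ∀ x ∈ Θ, ∃ L, Tendsto (fun n => fn n ω x) atTop (nhds L) := by
        intro x hx
        refine cauchySeq_tendsto_of_complete ?_
        rw [Metric.cauchySeq_iff]
        intro ε hε
        obtain ⟨N, hN⟩ := Metric.uniformCauchySeqOn_iff.1 hc ε hε
        exact ⟨N, fun m hm n hn => hN m hm n hn x hx⟩
      choose g hg using hptc
      set G : EuclideanSpace ℝ (Fin p) → ℝ := fun x => if hx : x ∈ Θ then g x hx else 0
        with hGdef
      have hGpt : ∀ x ∈ Θ, Tendsto (fun n => fn n ω x) atTop (nhds (G x)) := by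
        intro x hx; rw [hGdef]; simp only [dif_pos hx]; exact hg x hx
      have hGu : TendstoUniformlyOn (fun n θ => fn n ω θ) G atTop Θ :=
        hc.tendstoUniformlyOn_of_tendsto hGpt
      have hGc : ContinuousOn G Θ := by
        refine hGu.continuousOn (Frequently.of_forall fun n => ?_)
        refine LipschitzOnWith.continuousOn (K := (B n ω).toNNReal)
          (LipschitzOnWith.of_dist_le_mul fun x hx y hy => ?_)
        rw [Real.dist_eq, dist_eq_norm]
        exact (hlip n ω x hx y hy).trans
          (mul_le_mul_of_nonneg_right (Real.le_coe_toNNReal _) (norm_nonneg _))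
      refine ⟨G, hGpt, hGc, fun d hd => ?_⟩
      exact tendsto_nhds_unique (hGpt d (hDΘ hd)) (hP.1 d hd)
    intro ω hP θ hθ
    obtain ⟨g, hgpt, hgc, hgD⟩ := hlimfun ω hP
    -- find a good ω₁ that also converges at θ
    obtain ⟨ω₁, hPω₁, hω₁θ⟩ := (hPae.and (hpt θ hθ)).exists
    obtain ⟨g₁, hg₁pt, hg₁c, hg₁D⟩ := hlimfun ω₁ hPω₁
    have hg₁θ : g₁ θ = f θ := tendsto_nhds_unique (hg₁pt θ hθ) hω₁θ
    -- g θ = g₁ θ by density and continuity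
    obtain ⟨u, huD, huθ⟩ := mem_closure_iff_seq_limit.1 (hDd hθ)
    have huΘ : Tendsto u atTop (nhdsWithin θ Θ) :=
      tendsto_nhdsWithin_of_tendsto_nhds_of_eventually_within u huθ
        (Eventually.of_forall fun k => hDΘ (huD k))
    have h1 : Tendsto (g ∘ u) atTop (nhds (g θ)) := (hgc θ hθ).tendsto.comp huΘ
    have h2 : Tendsto (g₁ ∘ u) atTop (nhds (g₁ θ)) := (hg₁c θ hθ).tendsto.comp huΘ
    have heq : g ∘ u = g₁ ∘ u := by
      funext k
      simp only [Function.comp_apply, hgD (u k) (huD k), hg₁D (u k) (huD k)]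
    rw [heq] at h1
    have : g θ = g₁ θ := tendsto_nhds_unique h1 h2
    have hgθ : g θ = f θ := this.trans hg₁θ
    rw [← hgθ]
    exact hgpt θ hθ
  filter_upwards [hPae] with ω hP
  exact (hcau ω hP).tendstoUniformlyOn_of_tendsto fun θ hθ => hptall ω hP θ hθ
end
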